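/- In an α-snowflake metric space (X, d^α) with α ∈ (0,1), every triple of points x, y, z satisfies d^α(x,y) ≤ max{ d^α(x,z) + (2^α − 1)·d^α(z,y), (2^α − 1)·d^α(x,z) + d^α(z,y) }. -/

import Mathlib

open Real

lemma snowflake_key {α : ℝ} (h0 : 0 < α) (h1 : α < 1) {a b : ℝ} (hb : 0 ≤ b) (hba : b ≤ a) :
    (a + b) ^ α ≤ a ^ α + ((2:ℝ) ^ α - 1) * b ^ α := by
  have ha : 0 ≤ a := hb.trans hba
  rcases eq_or_lt_of_le ha with h | ha'
  · have hb0 : b = 0 := le_antisymm (hba.trans h.symm.le) hb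
    simp [← h, hb0, Real.zero_rpow h0.ne']
  have hconc := Real.concaveOn_rpow h0.le h1.le
  set l : ℝ := (a - b) / a with hl
  set m : ℝ := b / a with hm
  have hl0 : 0 ≤ l := div_nonneg (by linarith) ha
  have hm0 : 0 ≤ m := div_nonneg hb ha
  have hlm : l + m = 1 := by rw [hl, hm, ← add_div, sub_add_cancel, div_self ha'.ne']
  have h2b : l * b + m * (a + b) = 2 * b := by rw [hl, hm, div_mul_eq_mul_div, div_mul_eq_mul_div, ← add_div, div_eq_iff ha'.ne']; ring
  have hA : m * b + l * (a + b) = a := by rw [hl, hm, div_mul_eq_mul_div, div_mul_eq_mul_div, ← add_div, div_eq_iff ha'.ne']; ring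
  have ineq1 := hconc.2 (Set.mem_Ici.2 hb) (Set.mem_Ici.2 (by linarith : (0:ℝ) ≤ a + b)) hl0 hm0 hlm
  have ineq2 := hconc.2 (Set.mem_Ici.2 hb) (Set.mem_Ici.2 (by linarith : (0:ℝ) ≤ a + b)) hm0 hl0 (by linarith)
  simp only [smul_eq_mul] at ineq1 ineq2
  rw [h2b] at ineq1
  rw [hA] at ineq2
  have h2 : (2 * b) ^ α = 2 ^ α * b ^ α := Real.mul_rpow (by norm_num) hb
  have e1 : l * b ^ α + m * b ^ α = b ^ α := by rw [← add_mul, hlm, one_mul]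
  have e2 : l * (a + b) ^ α + m * (a + b) ^ α = (a + b) ^ α := by rw [← add_mul, hlm, one_mul]
  linarith [ineq1, ineq2, h2.le, h2.ge]

/-- In an `α`-snowflake metric space `(X, d^α)` with `α ∈ (0,1)`, every triple of points
`x, y, z` satisfies the small rough angle inequality
`d^α(x,y) ≤ max { d^α(x,z) + (2^α − 1)·d^α(z,y), (2^α − 1)·d^α(x,z) + d^α(z,y) }`. -/
theorem snowflake_small_rough_angles (Y : Type*) [MetricSpace Y] (α : ℝ)
    (h0 : 0 < α) (h1 : α < 1) (x y z : Y) :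
    dist x y ^ α ≤
      max (dist x z ^ α + ((2:ℝ) ^ α - 1) * dist z y ^ α)
          (((2:ℝ) ^ α - 1) * dist x z ^ α + dist z y ^ α) := by
  have htri : dist x y ≤ dist x z + dist z y := dist_triangle x z y
  have hxy : dist x y ^ α ≤ (dist x z + dist z y) ^ α :=
    Real.rpow_le_rpow dist_nonneg htri h0.le
  rcases le_total (dist z y) (dist x z) with h | h
  · exact le_max_of_le_left (hxy.trans (snowflake_key h0 h1 dist_nonneg h))
  · refine le_max_of_le_right (hxy.trans ?_)
    have := snowflake_key h0 h1 (dist_nonneg (x := x) (y := z)) h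
    calc (dist x z + dist z y) ^ α = (dist z y + dist x z) ^ α := by ring_nf
    _ ≤ dist z y ^ α + ((2:ℝ) ^ α - 1) * dist x z ^ α := this
    _ = ((2:ℝ) ^ α - 1) * dist x z ^ α + dist z y ^ α := by ring
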